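/- For 0 < |z| < 1, dP_{n,Zag}(z) = P_{n-1,Zag}(z) d i arg z + (-1)^n (log^{n-1}|z|/(n-1)!) π_{n-1} d log(1 - z), where P_{n,Zag}(z) = π_{n-1}(∑_{k=0}^{n-1} (-log|z|)^k/k! Li_{n-k}(z)). -/

import Mathlib

/-- The polylogarithm `Li k z = ∑_{m ≥ 1} z^m / m^k`. -/
noncomputable def Li (k : ℕ) (z : ℂ) : ℂ := ∑' m : ℕ+, z ^ (m : ℕ) / ((m : ℕ) : ℂ) ^ k

/-- The projection `π_m : ℂ = ℝ(m) ⊕ ℝ(m+1) → ℝ(m)`, where `ℝ(m) = (2πi)^m ℝ`: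
the real part for `m` even, `i` times the imaginary part for `m` odd. -/
noncomputable def PiProj (m : ℕ) (w : ℂ) : ℂ :=
  if Even m then (w.re : ℂ) else (w.im : ℂ) * Complex.I

/-- Zagier's single-valued polylogarithm
`P_{n,Zag}(z) = π_{n-1}(∑_{k=0}^{n-1} ((-log|z|)^k / k!) Li_{n-k}(z))`. -/
noncomputable def PZag (n : ℕ) (z : ℂ) : ℂ :=
  PiProj (n - 1) (∑ k ∈ Finset.range n,
    (((-Real.log ‖z‖) ^ k / (Nat.factorial k) : ℝ) : ℂ) * Li (n - k) z)

open Complex Finset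


lemma summable_nat_li (k : ℕ) {z : ℂ} (h : ‖z‖ < 1) :
    Summable (fun m : ℕ => z ^ (m + 1) / (((m + 1 : ℕ)) : ℂ) ^ k) := by
  apply Summable.of_norm_bounded ((summable_geometric_of_lt_one (norm_nonneg z) h).mul_left ‖z‖)
  intro m
  have h1 : (1 : ℝ) ≤ ((m + 1 : ℕ) : ℝ) ^ k := one_le_pow₀ (by exact_mod_cast Nat.succ_le_succ (Nat.zero_le m))
  have h2 : ‖((m + 1 : ℕ) : ℂ)‖ = ((m + 1 : ℕ) : ℝ) := by
    rw [Complex.norm_natCast]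
  rw [norm_div, norm_pow, norm_pow, h2, pow_succ, mul_comm (‖z‖ ^ m)]
  exact div_le_self (by positivity) h1

lemma hasSum_nat_li (k : ℕ) {z : ℂ} (h : ‖z‖ < 1) :
    HasSum (fun m : ℕ => z ^ (m + 1) / (((m + 1 : ℕ)) : ℂ) ^ k) (Li k z) := by
  have hs := summable_nat_li k h
  have he : ∀ m : ℕ, ((fun p : ℕ+ => z ^ (p : ℕ) / ((p : ℕ) : ℂ) ^ k) ∘ ⇑Equiv.pnatEquivNat.symm) m
      = z ^ (m + 1) / (((m + 1 : ℕ)) : ℂ) ^ k := by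
    intro m; simp [Equiv.pnatEquivNat, Nat.succPNat]
  have hs' : Summable ((fun p : ℕ+ => z ^ (p : ℕ) / ((p : ℕ) : ℂ) ^ k) ∘ ⇑Equiv.pnatEquivNat.symm) :=
    hs.congr (fun m => (he m).symm)
  have hs2 : Summable (fun p : ℕ+ => z ^ (p : ℕ) / ((p : ℕ) : ℂ) ^ k) :=
    (Equiv.pnatEquivNat.symm.summable_iff).mp hs'
  have hh : HasSum (fun p : ℕ+ => z ^ (p : ℕ) / ((p : ℕ) : ℂ) ^ k) (Li k z) := hs2.hasSum
  exact ((Equiv.pnatEquivNat.symm.hasSum_iff).mpr hh).congr_fun he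

lemma Li_zero_eq {z : ℂ} (h : ‖z‖ < 1) : Li 0 z = z * (1 - z)⁻¹ := by
  have h1 := hasSum_nat_li 0 h
  have h2 : HasSum (fun m : ℕ => z ^ (m + 1) / (((m + 1 : ℕ)) : ℂ) ^ 0) (z * (1 - z)⁻¹) := by
    have := (hasSum_geometric_of_norm_lt_one h).mul_left z
    refine this.congr_fun fun m => ?_
    simp [pow_succ, mul_comm]
  exact h1.unique h2

lemma hasDerivAt_Li_aux (k : ℕ) {z : ℂ} (h : ‖z‖ < 1) :
    HasDerivAt (Li k)
      (∑' m : ℕ, ((m + 1 : ℕ) : ℂ) * z ^ m / (((m + 1 : ℕ)) : ℂ) ^ k) z := by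
  set r : ℝ := (1 + ‖z‖) / 2 with hr
  have hzr : ‖z‖ < r := by rw [hr]; linarith
  have hr0 : 0 ≤ r := le_trans (norm_nonneg z) hzr.le
  have hr1 : r < 1 := by rw [hr]; linarith
  have hz : z ∈ Metric.ball (0 : ℂ) r := by simpa [Metric.mem_ball] using hzr
  have hu : Summable (fun m : ℕ => ((m + 1 : ℕ) : ℝ) * r ^ m) := by
    have h1 : Summable (fun m : ℕ => (m : ℝ) ^ 1 * r ^ m) :=
      summable_pow_mul_geometric_of_norm_lt_one 1 (by rwa [Real.norm_of_nonneg hr0])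
    have h2 : Summable (fun m : ℕ => r ^ m) := summable_geometric_of_lt_one hr0 hr1
    refine (h1.add h2).congr fun m => ?_
    push_cast; ring
  refine hasDerivAt_of_tendstoUniformlyOn (l := Filter.atTop) (Metric.isOpen_ball)
    (f := fun (t : Finset ℕ) (x : ℂ) => ∑ m ∈ t, x ^ (m + 1) / (((m + 1 : ℕ)) : ℂ) ^ k)
    (f' := fun (t : Finset ℕ) (x : ℂ) => ∑ m ∈ t, ((m + 1 : ℕ) : ℂ) * x ^ m / (((m + 1 : ℕ)) : ℂ) ^ k)
    (g := Li k)
    (g' := fun x => ∑' m : ℕ, ((m + 1 : ℕ) : ℂ) * x ^ m / (((m + 1 : ℕ)) : ℂ) ^ k)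
    ?_ ?_ ?_ hz
  · refine tendstoUniformlyOn_tsum hu fun m x hx => ?_
    have hxr : ‖x‖ ≤ r := by
      have := Metric.mem_ball.mp hx
      rw [dist_zero_right] at this
      exact this.le
    have h1 : (1 : ℝ) ≤ ((m + 1 : ℕ) : ℝ) ^ k :=
      one_le_pow₀ (by exact_mod_cast Nat.succ_le_succ (Nat.zero_le m))
    rw [norm_div, norm_mul, norm_pow, norm_pow, Complex.norm_natCast]
    calc ((m + 1 : ℕ) : ℝ) * ‖x‖ ^ m / ((m + 1 : ℕ) : ℝ) ^ k
        ≤ ((m + 1 : ℕ) : ℝ) * ‖x‖ ^ m := div_le_self (by positivity) h1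
      _ ≤ ((m + 1 : ℕ) : ℝ) * r ^ m := by
          exact mul_le_mul_of_nonneg_left (pow_le_pow_left₀ (norm_nonneg x) hxr m) (by positivity)
  · filter_upwards with t x _
    refine HasDerivAt.fun_sum fun m _ => ?_
    have := (hasDerivAt_pow (m + 1) x).div_const ((((m + 1 : ℕ)) : ℂ) ^ k)
    simpa using this
  · intro x hx
    have hx1 : ‖x‖ < 1 := lt_trans (by simpa [Metric.mem_ball] using hx) hr1
    exact hasSum_nat_li k hx1

lemma hasDerivAt_Li (k : ℕ) (hk : 1 ≤ k) {z : ℂ} (h0 : z ≠ 0) (h : ‖z‖ < 1) :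
    HasDerivAt (Li k) (Li (k - 1) z / z) z := by
  have h1 := hasDerivAt_Li_aux k h
  have h2 : (∑' m : ℕ, ((m + 1 : ℕ) : ℂ) * z ^ m / (((m + 1 : ℕ)) : ℂ) ^ k)
      = Li (k - 1) z / z := by
    have h3 := (hasSum_nat_li (k - 1) h).div_const z
    refine HasSum.tsum_eq (h3.congr_fun fun m => ?_)
    have hm : ((m : ℂ) + 1) ≠ 0 := Nat.cast_add_one_ne_zero m
    have hkk : k = (k - 1) + 1 := (Nat.succ_pred_eq_of_pos hk).symm
    rw [hkk]
    push_cast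
    rw [pow_succ, pow_succ]
    field_simp
  rwa [h2] at h1

noncomputable def Mre (z : ℂ) : ℂ →L[ℝ] ℝ :=
  Complex.reCLM.comp ((z⁻¹ • ContinuousLinearMap.id ℂ ℂ).restrictScalars ℝ)

lemma Mre_apply (z v : ℂ) : Mre z v = (z⁻¹ * v).re := by
  simp [Mre, smul_eq_mul]

lemma hasFDerivAt_logAbs {z : ℂ} (h0 : z ≠ 0) :
    HasFDerivAt (fun w : ℂ => Real.log ‖w‖) (Mre z) z := by
  have hnsq : Complex.normSq z ≠ 0 := by
    simpa using Complex.normSq_pos.mpr h0 |>.ne'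
  have hD : HasFDerivAt Complex.normSq
      ((Complex.reCLM z • Complex.reCLM + Complex.reCLM z • Complex.reCLM)
        + (Complex.imCLM z • Complex.imCLM + Complex.imCLM z • Complex.imCLM)) z := by
    have h := ((Complex.reCLM.hasFDerivAt (x := z)).mul (Complex.reCLM.hasFDerivAt (x := z))).add
      ((Complex.imCLM.hasFDerivAt (x := z)).mul (Complex.imCLM.hasFDerivAt (x := z)))
    have he : Complex.normSq = fun w : ℂ =>
        Complex.reCLM w * Complex.reCLM w + Complex.imCLM w * Complex.imCLM w := by
      funext w; simp [Complex.normSq_apply]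
    rw [he]
    exact h
  have hlog := (Real.hasDerivAt_log hnsq).comp_hasFDerivAt z hD
  have hdiv := hlog.const_smul (2⁻¹ : ℝ)
  have hfe : (fun w : ℂ => Real.log ‖w‖)
      = fun w : ℂ => (2⁻¹ : ℝ) • Real.log (Complex.normSq w) := by
    funext w
    rw [Complex.norm_def, Real.log_sqrt (Complex.normSq_nonneg w), smul_eq_mul]
    ring
  rw [hfe]
  refine hdiv.congr_fderiv ?_
  ext v
  simp only [Mre, ContinuousLinearMap.coe_comp', Function.comp_apply,
    ContinuousLinearMap.coe_restrictScalars', ContinuousLinearMap.smul_apply,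
    ContinuousLinearMap.coe_smul', Pi.smul_apply, ContinuousLinearMap.add_apply,
    ContinuousLinearMap.coe_id', id_eq, Complex.reCLM_apply, Complex.imCLM_apply,
    smul_eq_mul, Complex.mul_re]
  rw [Complex.inv_re, Complex.inv_im]
  field_simp
  ring

noncomputable def piL (m : ℕ) : ℂ →L[ℝ] ℂ :=
  if Even m then Complex.ofRealCLM.comp Complex.reCLM
  else Complex.imCLM.smulRight Complex.I

lemma piL_apply (m : ℕ) (w : ℂ) : piL m w = PiProj m w := by
  by_cases h : Even m <;>
    simp [piL, PiProj, h, Complex.real_smul]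

lemma PiProj_add (m : ℕ) (a b : ℂ) : PiProj m (a + b) = PiProj m a + PiProj m b := by
  by_cases h : Even m <;> simp [PiProj, h] <;> push_cast <;> ring

lemma PiProj_neg (m : ℕ) (a : ℂ) : PiProj m (-a) = -PiProj m a := by
  by_cases h : Even m <;> simp [PiProj, h] <;> push_cast <;> ring

lemma PiProj_real_mul (m : ℕ) (r : ℝ) (w : ℂ) :
    PiProj m ((r : ℂ) * w) = (r : ℂ) * PiProj m w := by
  by_cases h : Even m <;>
    simp [PiProj, h, Complex.mul_re, Complex.mul_im] <;> push_cast <;> ring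

lemma PiProj_succ_mul_I (m : ℕ) (w : ℂ) (t : ℝ) :
    PiProj (m + 1) (w * (Complex.I * (t : ℂ))) = PiProj m w * (Complex.I * (t : ℂ)) := by
  by_cases h : Even m
  · have h1 : ¬ Even (m + 1) := by simp [Nat.even_add_one, h]
    simp only [PiProj, if_pos h, if_neg h1]
    apply Complex.ext <;>
      simp [Complex.mul_re, Complex.mul_im] <;> ring
  · have h1 : Even (m + 1) := by simp [Nat.even_add_one, h]
    simp only [PiProj, if_pos h1, if_neg h]
    apply Complex.ext <;>
      simp [Complex.mul_re, Complex.mul_im] <;> ring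

/-- `dP_{n,Zag}(z) = P_{n-1,Zag}(z) d i arg z + (-1)^n (log^{n-1}|z|/(n-1)!) π_{n-1} d log(1-z)`
on the punctured unit disc, as an identity of real 1-forms: here `d i arg z` evaluated on the
tangent vector `v` is `i Im(v/z)` and `d log(1-z)` evaluated on `v` is `-v/(1-z)`. -/
theorem dPZag (n : ℕ) (hn : 2 ≤ n) (z : ℂ) (h0 : z ≠ 0) (h1 : ‖z‖ < 1) (v : ℂ) :
    fderiv ℝ (PZag n) z v
      = PZag (n - 1) z * (Complex.I * (((v / z).im : ℝ) : ℂ))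
        + (-1 : ℂ) ^ n * (((Real.log ‖z‖) ^ (n - 1)
            / (Nat.factorial (n - 1)) : ℝ) : ℂ) * PiProj (n - 1) (-v / (1 - z)) := by
  obtain ⟨N, rfl⟩ : ∃ N, n = N + 2 := ⟨n - 2, by omega⟩
  set Lr := Real.log ‖z‖ with hLr
  have hphi : ∀ k : ℕ, HasFDerivAt
      (fun w : ℂ => (((-Real.log ‖w‖) ^ k / (Nat.factorial k) : ℝ) : ℂ))
      (Complex.ofRealCLM.comp (((Nat.factorial k : ℝ)⁻¹) •
        (((k : ℝ) * (-Lr) ^ (k - 1)) • -(Mre z)))) z := by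
    intro k
    have h2 := (hasDerivAt_pow k (-Lr)).comp_hasFDerivAt z (hasFDerivAt_logAbs h0).neg
    have h3 := h2.const_smul ((Nat.factorial k : ℝ)⁻¹)
    have h4 := (Complex.ofRealCLM.hasFDerivAt
      (x := (Nat.factorial k : ℝ)⁻¹ • (-Real.log ‖z‖) ^ k)).comp z h3
    have he : (fun w : ℂ => (((-Real.log ‖w‖) ^ k / (Nat.factorial k) : ℝ) : ℂ))
        = (⇑Complex.ofRealCLM ∘ fun w : ℂ =>
            (Nat.factorial k : ℝ)⁻¹ • (-Real.log ‖w‖) ^ k) := by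
      funext w
      simp [div_eq_inv_mul, smul_eq_mul]
    rw [he]
    exact h4
  have hLiD : ∀ k ∈ Finset.range (N + 2), HasFDerivAt (Li (N + 2 - k))
      ((ContinuousLinearMap.smulRight (1 : ℂ →L[ℂ] ℂ)
        (Li (N + 2 - k - 1) z / z)).restrictScalars ℝ) z := by
    intro k hk
    have hk1 : 1 ≤ N + 2 - k := by
      simp only [Finset.mem_range] at hk; omega
    exact (hasDerivAt_iff_hasFDerivAt.mp (hasDerivAt_Li _ hk1 h0 h1)).restrictScalars ℝ
  have hG := HasFDerivAt.fun_sum (fun k (hk : k ∈ Finset.range (N + 2)) =>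
    (hphi k).mul (hLiD k hk))
  have hfinal := ((piL (N + 2 - 1)).hasFDerivAt).comp z hG
  have hPZ : PZag (N + 2) = ⇑(piL (N + 2 - 1)) ∘ (fun w => ∑ k ∈ Finset.range (N + 2),
      (((-Real.log ‖w‖) ^ k / (Nat.factorial k) : ℝ) : ℂ) * Li (N + 2 - k) w) := by
    funext w
    simp only [PZag, Function.comp_apply, piL_apply]
  have hfinal' : HasFDerivAt (⇑(piL (N + 2 - 1)) ∘ (fun w => ∑ k ∈ Finset.range (N + 2),
      (((-Real.log ‖w‖) ^ k / (Nat.factorial k) : ℝ) : ℂ) * Li (N + 2 - k) w)) _ z := hfinal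
  rw [hPZ, hfinal'.fderiv]
  simp only [ContinuousLinearMap.coe_comp', Function.comp_apply,
    ContinuousLinearMap.coe_sum', Finset.sum_apply, ContinuousLinearMap.add_apply,
    ContinuousLinearMap.coe_smul', Pi.smul_apply,
    ContinuousLinearMap.coe_restrictScalars', ContinuousLinearMap.smulRight_apply,
    ContinuousLinearMap.one_apply, ContinuousLinearMap.neg_apply,
    Complex.ofRealCLM_apply, Mre_apply, smul_eq_mul, Complex.real_smul, piL_apply]
  push_cast
  rw [← hLr]
  set R : ℝ := (z⁻¹ * v).re with hR
  set T : ℝ := (v / z).im with hT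
  have hz1 : (1 : ℂ) - z ≠ 0 := by
    intro h
    have : z = 1 := by linear_combination -h
    rw [this] at h1; simp at h1
  have hLi0 : Li 0 z / z = (1 - z)⁻¹ := by
    rw [Li_zero_eq h1, mul_comm, mul_div_assoc, div_self h0, mul_one]
  have hvz : v * z⁻¹ = (R : ℂ) + (T : ℝ) * Complex.I := by
    rw [hR, hT, div_eq_mul_inv, mul_comm z⁻¹ v]
    exact (Complex.re_add_im (v * z⁻¹)).symm
  set W : ℂ := ∑ k ∈ Finset.range (N + 1),
    (-(Lr : ℂ)) ^ k / ((Nat.factorial k : ℕ) : ℂ) * Li (N + 1 - k) z with hW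
  have hsum : (∑ x ∈ Finset.range (N + 2),
      ((-(Lr : ℂ)) ^ x / ((Nat.factorial x : ℕ) : ℂ) * (v * (Li (N + 2 - x - 1) z / z)) +
        Li (N + 2 - x) z * ((((Nat.factorial x : ℕ) : ℂ))⁻¹ *
          ((x : ℂ) * (-(Lr : ℂ)) ^ (x - 1) * -(R : ℂ)))))
      = W * (Complex.I * (T : ℂ))
        + ((((-Lr) ^ (N + 1) / (Nat.factorial (N + 1)) : ℝ)) : ℂ) * (v * (1 - z)⁻¹) := by
    rw [Finset.sum_add_distrib]
    have e1 : (∑ x ∈ Finset.range (N + 2),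
        Li (N + 2 - x) z * ((((Nat.factorial x : ℕ) : ℂ))⁻¹ *
          ((x : ℂ) * (-(Lr : ℂ)) ^ (x - 1) * -(R : ℂ)))) = -(R : ℂ) * W := by
      rw [Finset.sum_range_succ']
      simp only [Nat.cast_zero, zero_mul, mul_zero, add_zero]
      rw [hW, Finset.mul_sum]
      refine Finset.sum_congr rfl fun i hi => ?_
      have h2 : N + 2 - (i + 1) = N + 1 - i := by omega
      rw [h2, Nat.factorial_succ]
      have hf : ((Nat.factorial i : ℕ) : ℂ) ≠ 0 := by
        exact_mod_cast Nat.cast_ne_zero.mpr (Nat.factorial_ne_zero i)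
      have hi1 : ((i : ℂ) + 1) ≠ 0 := Nat.cast_add_one_ne_zero i
      push_cast
      field_simp
    have e2 : (∑ x ∈ Finset.range (N + 2),
        (-(Lr : ℂ)) ^ x / ((Nat.factorial x : ℕ) : ℂ) * (v * (Li (N + 2 - x - 1) z / z)))
        = (v * z⁻¹) * W
          + ((((-Lr) ^ (N + 1) / (Nat.factorial (N + 1)) : ℝ)) : ℂ) * (v * (1 - z)⁻¹) := by
      rw [Finset.sum_range_succ]
      have h3 : N + 2 - (N + 1) - 1 = 0 := by omega
      rw [h3, hLi0, hW, Finset.mul_sum]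
      have h4 : (∑ i ∈ Finset.range (N + 1),
          (-(Lr : ℂ)) ^ i / ((Nat.factorial i : ℕ) : ℂ) * (v * (Li (N + 2 - i - 1) z / z)))
          = ∑ i ∈ Finset.range (N + 1),
            v * z⁻¹ * ((-(Lr : ℂ)) ^ i / ((Nat.factorial i : ℕ) : ℂ) * Li (N + 1 - i) z) := by
        refine Finset.sum_congr rfl fun i hi => ?_
        have h5 : N + 2 - i - 1 = N + 1 - i := by omega
        rw [h5, div_eq_mul_inv]
        ring
      rw [h4]
      push_cast
      ring
    rw [e1, e2, hvz]
    ring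
  rw [hsum, PiProj_add, PiProj_succ_mul_I, PiProj_real_mul]
  have hPZ1 : PiProj N W = PZag (N + 1) z := by
    rw [PZag, hW]
    norm_num
    rfl
  have hneg : -v / (1 - z) = -(v * (1 - z)⁻¹) := by
    rw [neg_div, div_eq_mul_inv]
  rw [hPZ1, hneg, PiProj_neg, hT]
  push_cast
  ring
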